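/- The Gibbs relation holds for the equation of state: for all ρ > 0 and θ > 0, θ·∂s/∂θ(ρ,θ) = ∂e/∂θ(ρ,θ) and θ·∂s/∂ρ(ρ,θ) = ∂e/∂ρ(ρ,θ) - p(ρ,θ)/ρ². -/

import Mathlib

/-- `P(Z) = Z` for `Z ≤ Z̃`, `P(Z) = (3/5)·Z^{5/3}·Z̃^{-2/3} + (2/5)·Z̃` for `Z > Z̃`. -/
noncomputable def Pfun (Zt Z : ℝ) : ℝ :=
  if Z ≤ Zt then Z else (3 / 5) * Z ^ ((5 : ℝ) / 3) * Zt ^ (-((2 : ℝ) / 3)) + (2 / 5) * Zt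

/-- `S(Z) = 1 - log(Z/Z̃)` for `Z ≤ Z̃`, `S(Z) = Z̃/Z` for `Z > Z̃`. -/
noncomputable def Sfun (Zt Z : ℝ) : ℝ :=
  if Z ≤ Zt then 1 - Real.log (Z / Zt) else Zt / Z

/-- Pressure `p(ρ,θ) = θ^{5/2}·P(ρ·θ^{-3/2})`. -/
noncomputable def pfun (Zt ρ θ : ℝ) : ℝ :=
  θ ^ ((5 : ℝ) / 2) * Pfun Zt (ρ * θ ^ (-((3 : ℝ) / 2)))

/-- Specific internal energy `e(ρ,θ) = (3/2)·θ^{5/2}·P(ρ·θ^{-3/2})/ρ`. -/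
noncomputable def efun (Zt ρ θ : ℝ) : ℝ :=
  (3 / 2) * θ ^ ((5 : ℝ) / 2) * Pfun Zt (ρ * θ ^ (-((3 : ℝ) / 2))) / ρ

/-- Specific entropy `s(ρ,θ) = S(ρ·θ^{-3/2})`. -/
noncomputable def sfun (Zt ρ θ : ℝ) : ℝ :=
  Sfun Zt (ρ * θ ^ (-((3 : ℝ) / 2)))

noncomputable def P' (Zt Z : ℝ) : ℝ :=
  if Z ≤ Zt then 1 else Z ^ ((2 : ℝ) / 3) * Zt ^ (-((2 : ℝ) / 3))

noncomputable def S' (Zt Z : ℝ) : ℝ :=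
  if Z ≤ Zt then -1 / Z else -Zt / Z ^ 2

-- outer branch derivative
lemma outerP (Zt : ℝ) {Z : ℝ} (hZ : 0 < Z) :
    HasDerivAt (fun x : ℝ => (3 / 5) * x ^ ((5 : ℝ) / 3) * Zt ^ (-((2 : ℝ) / 3)) + (2 / 5) * Zt)
      (Z ^ ((2 : ℝ) / 3) * Zt ^ (-((2 : ℝ) / 3))) Z := by
  have h := (Real.hasDerivAt_rpow_const (x := Z) (p := (5 : ℝ) / 3) (Or.inl hZ.ne'))
  have h2 := ((h.const_mul ((3:ℝ)/5)).mul_const (Zt ^ (-((2 : ℝ) / 3)))).add_const ((2/5)*Zt)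
  refine h2.congr_deriv ?_
  rw [show (5:ℝ)/3 - 1 = 2/3 by norm_num]
  ring

lemma hasDerivAt_Pfun (Zt : ℝ) (hZt : 0 < Zt) {Z : ℝ} (hZ : 0 < Z) :
    HasDerivAt (Pfun Zt) (P' Zt Z) Z := by
  rcases lt_trichotomy Z Zt with h | h | h
  · have hev : Pfun Zt =ᶠ[nhds Z] id := by
      filter_upwards [Iio_mem_nhds h] with x hx
      simp [Pfun, (Set.mem_Iio.mp hx).le]
    rw [P', if_pos h.le]
    exact (hasDerivAt_id Z).congr_of_eventuallyEq hev
  · subst h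
    have hval : (3 / 5) * Z ^ ((5 : ℝ) / 3) * Z ^ (-((2 : ℝ) / 3)) + (2 / 5) * Z = Z := by
      rw [mul_assoc, ← Real.rpow_add hZ]
      norm_num
      ring
    have hinner : HasDerivWithinAt (Pfun Z) 1 (Set.Iic Z) Z := by
      refine (hasDerivAt_id Z).hasDerivWithinAt.congr (fun x hx => ?_) ?_
      · simp [Pfun, Set.mem_Iic.mp hx]
      · simp [Pfun]
    have houter : HasDerivWithinAt (Pfun Z) 1 (Set.Ici Z) Z := by
      have h1 : Z ^ ((2 : ℝ) / 3) * Z ^ (-((2 : ℝ) / 3)) = 1 := by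
        rw [← Real.rpow_add hZ]; norm_num
      have := (outerP Z hZ).hasDerivWithinAt (s := Set.Ici Z)
      rw [h1] at this
      refine this.congr (fun x hx => ?_) ?_
      · rcases eq_or_lt_of_le (Set.mem_Ici.mp hx) with rfl | hlt
        · simp [Pfun, hval]
        · simp [Pfun, not_le.mpr hlt]
      · simp [Pfun, hval]
    have := hinner.union houter
    rw [Set.Iic_union_Ici] at this
    rw [P', if_pos le_rfl]
    exact this.hasDerivAt Filter.univ_mem
  · have hev : Pfun Zt =ᶠ[nhds Z]
        fun x => (3 / 5) * x ^ ((5 : ℝ) / 3) * Zt ^ (-((2 : ℝ) / 3)) + (2 / 5) * Zt := by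
      filter_upwards [Ioi_mem_nhds h] with x hx
      simp [Pfun, not_le.mpr (Set.mem_Ioi.mp hx)]
    rw [P', if_neg (not_le.mpr h)]
    exact (outerP Zt hZ).congr_of_eventuallyEq hev

lemma innerS (Zt : ℝ) (hZt : 0 < Zt) {Z : ℝ} (hZ : 0 < Z) :
    HasDerivAt (fun x : ℝ => 1 - Real.log (x / Zt)) (-1 / Z) Z := by
  have h1 : HasDerivAt (fun x : ℝ => x / Zt) (1 / Zt) Z := by
    simpa using (hasDerivAt_id Z).div_const Zt
  have h2 := (Real.hasDerivAt_log (div_ne_zero hZ.ne' hZt.ne')).comp Z h1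
  have h3 := h2.const_sub 1
  refine h3.congr_deriv ?_
  field_simp

lemma outerS (Zt : ℝ) {Z : ℝ} (hZ : 0 < Z) :
    HasDerivAt (fun x : ℝ => Zt / x) (-Zt / Z ^ 2) Z := by
  have h : HasDerivAt (fun x : ℝ => Zt / x) (Zt * -(Z ^ 2)⁻¹) Z := by
    simpa [div_eq_mul_inv] using (hasDerivAt_inv hZ.ne').const_mul Zt
  convert h using 1
  field_simp

lemma hasDerivAt_Sfun (Zt : ℝ) (hZt : 0 < Zt) {Z : ℝ} (hZ : 0 < Z) :
    HasDerivAt (Sfun Zt) (S' Zt Z) Z := by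
  rcases lt_trichotomy Z Zt with h | h | h
  · have hev : Sfun Zt =ᶠ[nhds Z] fun x => 1 - Real.log (x / Zt) := by
      filter_upwards [Iio_mem_nhds h] with x hx
      simp [Sfun, (Set.mem_Iio.mp hx).le]
    rw [S', if_pos h.le]
    exact (innerS Zt hZt hZ).congr_of_eventuallyEq hev
  · subst h
    have hval : (1 : ℝ) - Real.log (Z / Z) = Z / Z := by
      rw [div_self hZ.ne', Real.log_one]; norm_num
    have hinner : HasDerivWithinAt (Sfun Z) (-1 / Z) (Set.Iic Z) Z := by
      refine (innerS Z hZ hZ).hasDerivWithinAt.congr (fun x hx => ?_) ?_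
      · simp [Sfun, Set.mem_Iic.mp hx]
      · simp [Sfun]
    have houter : HasDerivWithinAt (Sfun Z) (-1 / Z) (Set.Ici Z) Z := by
      have hv : -Z / Z ^ 2 = -1 / Z := by field_simp
      have := (outerS Z hZ).hasDerivWithinAt (s := Set.Ici Z)
      rw [hv] at this
      refine this.congr (fun x hx => ?_) ?_
      · rcases eq_or_lt_of_le (Set.mem_Ici.mp hx) with rfl | hlt
        · norm_num [Sfun, div_self hZ.ne']
        · simp [Sfun, not_le.mpr hlt]
      · norm_num [Sfun, div_self hZ.ne']
    have := hinner.union houter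
    rw [Set.Iic_union_Ici] at this
    rw [S', if_pos le_rfl]
    exact this.hasDerivAt Filter.univ_mem
  · have hev : Sfun Zt =ᶠ[nhds Z] fun x => Zt / x := by
      filter_upwards [Ioi_mem_nhds h] with x hx
      simp [Sfun, not_le.mpr (Set.mem_Ioi.mp hx)]
    rw [S', if_neg (not_le.mpr h)]
    exact (outerS Zt hZ).congr_of_eventuallyEq hev

lemma key (Zt : ℝ) (hZt : 0 < Zt) {Z : ℝ} (hZ : 0 < Z) :
    S' Zt Z = (3 / 2) * P' Zt Z / Z - (5 / 2) * Pfun Zt Z / Z ^ 2 := by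
  unfold S' P' Pfun
  split_ifs with h
  · field_simp; ring
  · have h1 : Z ^ ((2 : ℝ) / 3) * Z = Z ^ ((5 : ℝ) / 3) := by
      nth_rewrite 2 [← Real.rpow_one Z]
      rw [← Real.rpow_add hZ]; norm_num
    rw [← h1]
    field_simp
    ring

/-- The Gibbs relation for the equation of state: for all `ρ > 0`, `θ > 0`,
`θ·∂s/∂θ(ρ,θ) = ∂e/∂θ(ρ,θ)` and `θ·∂s/∂ρ(ρ,θ) = ∂e/∂ρ(ρ,θ) - p(ρ,θ)/ρ²`. -/
theorem stmt4 (Zt : ℝ) (hZt : 0 < Zt) :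
    ∀ ρ θ : ℝ, 0 < ρ → 0 < θ →
      ∃ dsθ deθ dsρ deρ : ℝ,
        HasDerivAt (fun t => sfun Zt ρ t) dsθ θ ∧
        HasDerivAt (fun t => efun Zt ρ t) deθ θ ∧
        HasDerivAt (fun r => sfun Zt r θ) dsρ ρ ∧
        HasDerivAt (fun r => efun Zt r θ) deρ ρ ∧
        θ * dsθ = deθ ∧
        θ * dsρ = deρ - pfun Zt ρ θ / ρ ^ 2 := by
  intro ρ θ hρ hθ
  have hθm : (0:ℝ) < θ ^ (-((3:ℝ)/2)) := Real.rpow_pos_of_pos hθ _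
  set Z : ℝ := ρ * θ ^ (-((3:ℝ)/2)) with hZdef
  have hZ : 0 < Z := mul_pos hρ hθm
  have hZθ : HasDerivAt (fun t : ℝ => ρ * t ^ (-((3:ℝ)/2)))
      (ρ * (-((3:ℝ)/2) * θ ^ (-((5:ℝ)/2)))) θ := by
    have := (Real.hasDerivAt_rpow_const (x := θ) (p := -((3:ℝ)/2)) (Or.inl hθ.ne')).const_mul ρ
    rwa [show -((3:ℝ)/2) - 1 = -((5:ℝ)/2) by norm_num] at this
  have hZρ : HasDerivAt (fun r : ℝ => r * θ ^ (-((3:ℝ)/2))) (θ ^ (-((3:ℝ)/2))) ρ := by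
    simpa using (hasDerivAt_id ρ).mul_const (θ ^ (-((3:ℝ)/2)))
  have hsθ : HasDerivAt (fun t => sfun Zt ρ t)
      (S' Zt Z * (ρ * (-((3:ℝ)/2) * θ ^ (-((5:ℝ)/2))))) θ :=
    (hasDerivAt_Sfun Zt hZt hZ).comp θ hZθ
  have hsρ : HasDerivAt (fun r => sfun Zt r θ) (S' Zt Z * θ ^ (-((3:ℝ)/2))) ρ :=
    (hasDerivAt_Sfun Zt hZt hZ).comp ρ hZρ
  have h52 : HasDerivAt (fun t : ℝ => t ^ ((5:ℝ)/2)) ((5/2) * θ ^ ((3:ℝ)/2)) θ := by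
    have := Real.hasDerivAt_rpow_const (x := θ) (p := (5:ℝ)/2) (Or.inl hθ.ne')
    rwa [show (5:ℝ)/2 - 1 = 3/2 by norm_num] at this
  have hPθ : HasDerivAt (fun t => Pfun Zt (ρ * t ^ (-((3:ℝ)/2))))
      (P' Zt Z * (ρ * (-((3:ℝ)/2) * θ ^ (-((5:ℝ)/2))))) θ :=
    by have := (hasDerivAt_Pfun Zt hZt hZ).comp θ hZθ; exact this
  have heθ := ((h52.const_mul ((3:ℝ)/2)).mul hPθ).div_const ρ
  have hPρ : HasDerivAt (fun r => Pfun Zt (r * θ ^ (-((3:ℝ)/2))))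
      (P' Zt Z * θ ^ (-((3:ℝ)/2))) ρ :=
    by have := (hasDerivAt_Pfun Zt hZt hZ).comp ρ hZρ; exact this
  have heρ := (hPρ.const_mul ((3:ℝ)/2 * θ ^ ((5:ℝ)/2))).div (hasDerivAt_id ρ) hρ.ne'
  simp only [id] at heρ
  have hkey := key Zt hZt hZ
  have hX : (0:ℝ) < θ ^ ((3:ℝ)/2) := Real.rpow_pos_of_pos hθ _
  have hB : θ ^ (-((3:ℝ)/2)) = (θ ^ ((3:ℝ)/2))⁻¹ := Real.rpow_neg hθ.le _
  have hCe : θ ^ ((5:ℝ)/2) = θ * θ ^ ((3:ℝ)/2) := by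
    rw [show (5:ℝ)/2 = 1 + 3/2 by norm_num, Real.rpow_add hθ, Real.rpow_one]
  have hDe : θ ^ (-((5:ℝ)/2)) = (θ ^ ((3:ℝ)/2))⁻¹ / θ := by
    rw [Real.rpow_neg hθ.le, hCe, mul_inv]
    ring
  refine ⟨_, _, _, _, hsθ, heθ, hsρ, heρ, ?_, ?_⟩
  · rw [hkey, hZdef, hB, hCe, hDe]
    field_simp
    ring
  · simp only [pfun]
    rw [hkey, hZdef, hB, hCe]
    field_simp
    ring
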